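/- Let C be a d×d unitary complex matrix and p a natural number. Then Tr((2·I − C − Cᴴ)^p) = Σ_{i=−p}^{p} (−1)^i · binom(2p, p+i) · Tr(C^i), where Cᴴ is the conjugate transpose, C^i for negative i denotes (C⁻¹)^{−i}, and binom denotes the binomial coefficient. -/

import Mathlib

open Matrix
/-- **Trace formula for powers of `2I − C − Cᴴ` with `C` unitary.**
For a `d×d` unitary complex matrix `C` and any `p : ℕ`,
`Tr((2I − C − Cᴴ)^p) = ∑_{i=−p}^{p} (−1)^i · binom(2p, p+i) · Tr(C^i)`,
where `C^i` for negative `i` is the integer (zpow) power of the matrix `C`. -/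
theorem trace_pow_two_sub_unitary (d : ℕ) (C : Matrix (Fin d) (Fin d) ℂ)
    (hC : C ∈ Matrix.unitaryGroup (Fin d) ℂ) (p : ℕ) :
    Matrix.trace (((2 : Matrix (Fin d) (Fin d) ℂ) - C - Cᴴ) ^ p) =
      ∑ i ∈ Finset.Icc (-(p : ℤ)) (p : ℤ),
        (((i.negOnePow : ℤ) * ((2 * p).choose ((p : ℤ) + i).toNat : ℤ) : ℤ) : ℂ) *
          Matrix.trace (C ^ i) := by
  have h1 : C * Cᴴ = 1 := by
    have := Matrix.mem_unitaryGroup_iff.mp hC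
    simpa [Matrix.star_eq_conjTranspose] using this
  have h2 : Cᴴ * C = 1 := by
    have := Matrix.mem_unitaryGroup_iff'.mp hC
    simpa [Matrix.star_eq_conjTranspose] using this
  have hdet : IsUnit C.det := Matrix.isUnit_det_of_right_inverse h1
  have hinv : C⁻¹ = Cᴴ := Matrix.inv_eq_right_inv h1
  have hcc : Commute C Cᴴ := by
    show C * Cᴴ = Cᴴ * C
    rw [h1, h2]
  have key : ((2 : Matrix (Fin d) (Fin d) ℂ) - C - Cᴴ) = -((C + (-1)) ^ 2 * Cᴴ) := by
    have e : (C + (-1 : Matrix (Fin d) (Fin d) ℂ)) ^ 2 * Cᴴ = C * (C * Cᴴ) - 2 * (C * Cᴴ) + Cᴴ := by noncomm_ring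
    rw [e, h1, mul_one, mul_one]
    abel
  have hcomm2 : Commute ((C + (-1 : Matrix (Fin d) (Fin d) ℂ)) ^ 2) Cᴴ :=
    ((hcc.add_left (Commute.neg_left (Commute.one_left Cᴴ))).pow_left 2)
  have hC1 : Commute C (-1 : Matrix (Fin d) (Fin d) ℂ) := (Commute.one_right C).neg_right
  have hz : ∀ m : ℕ, m ≤ 2 * p → C ^ m * Cᴴ ^ p = C ^ ((m : ℤ) - p) := by
    intro m _
    rw [sub_eq_add_neg, Matrix.zpow_add hdet, zpow_natCast, Matrix.zpow_neg_natCast,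
      ← Matrix.inv_pow', hinv]
  have hncast : ∀ n : ℕ, ((n : Matrix (Fin d) (Fin d) ℂ)) = (n : ℂ) • (1 : Matrix (Fin d) (Fin d) ℂ) := by
    intro n
    rw [← map_natCast (algebraMap ℂ (Matrix (Fin d) (Fin d) ℂ)) n, Algebra.algebraMap_eq_smul_one]
  have hneg : (-1 : Matrix (Fin d) (Fin d) ℂ) = (-1 : ℂ) • (1 : Matrix (Fin d) (Fin d) ℂ) := by simp
  have hpar : ∀ a b : ℕ, a % 2 = b % 2 → (-1 : ℂ) ^ a = (-1 : ℂ) ^ b := by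
    intro a b h
    rw [← Nat.div_add_mod a 2, ← Nat.div_add_mod b 2, h, pow_add, pow_add, pow_mul, pow_mul]
    norm_num
  calc Matrix.trace (((2 : Matrix (Fin d) (Fin d) ℂ) - C - Cᴴ) ^ p)
      = Matrix.trace ((-1 : Matrix (Fin d) (Fin d) ℂ) ^ p * ((C + (-1)) ^ (2 * p) * Cᴴ ^ p)) := by
        rw [key, neg_pow, hcomm2.mul_pow, ← pow_mul]
    _ = ∑ m ∈ Finset.range (2 * p + 1),
          ((-1 : ℂ) ^ p * ((-1 : ℂ) ^ (2 * p - m) * ((2 * p).choose m : ℂ))) *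
            Matrix.trace (C ^ m * Cᴴ ^ p) := by
        rw [hC1.add_pow]
        rw [Finset.sum_mul, Finset.mul_sum, Matrix.trace_sum]
        refine Finset.sum_congr rfl fun m hm => ?_
        rw [hncast, hneg, smul_pow, smul_pow]
        simp only [one_pow, smul_mul_assoc, mul_smul_comm, one_mul, mul_one, Matrix.trace_smul, smul_smul,
          smul_eq_mul]
        ring
    _ = ∑ m ∈ Finset.range (2 * p + 1),
          ((-1 : ℂ) ^ p * ((-1 : ℂ) ^ (2 * p - m) * ((2 * p).choose m : ℂ))) *
            Matrix.trace (C ^ ((m : ℤ) - p)) := by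
        refine Finset.sum_congr rfl fun m hm => ?_
        rw [hz m (by simpa using Nat.lt_succ_iff.mp (Finset.mem_range.mp hm))]
    _ = ∑ i ∈ Finset.Icc (-(p : ℤ)) (p : ℤ),
        (((i.negOnePow : ℤ) * ((2 * p).choose ((p : ℤ) + i).toNat : ℤ) : ℤ) : ℂ) *
          Matrix.trace (C ^ i) := by
        refine Finset.sum_nbij' (fun m => (m : ℤ) - p) (fun i => (i + p).toNat) ?_ ?_ ?_ ?_ ?_
        · intro m hm
          simp only [Finset.mem_range] at hm
          simp only [Finset.mem_Icc]
          omega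
        · intro i hi
          simp only [Finset.mem_Icc] at hi
          simp only [Finset.mem_range]
          omega
        · intro m hm; simp only [Finset.mem_range] at hm; omega
        · intro i hi; simp only [Finset.mem_Icc] at hi; omega
        · intro m hm
          simp only [Finset.mem_range] at hm
          have ht : ((p : ℤ) + ((m : ℤ) - p)).toNat = m := by omega
          rw [ht]
          congr 1
          have hs : (((m : ℤ) - p).negOnePow : ℤ) = ((m : ℤ).negOnePow : ℤ) * ((p : ℤ).negOnePow : ℤ) := by
            rw [Int.negOnePow_sub]; push_cast; ring
          push_cast [hs, Int.coe_negOnePow_natCast]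
          rw [hpar (2 * p - m) m (by omega)]
          ring
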